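/- If G is a tree with d vertices (d ≥ 1), then the resilience of G is at most log₂(d) + 1. -/

import Mathlib

open SimpleGraph

/-- One step of a disintegration: `D` consists of exactly one vertex from each
connected component of the subgraph of `G` induced on `R`. -/
def DisStep {V : Type*} (G : SimpleGraph V) (R D : Set V) : Prop :=
  ∃ hsub : D ⊆ R,
    (∀ (v w : V) (hv : v ∈ D) (hw : w ∈ D), v ≠ w →
      (G.induce R).connectedComponentMk ⟨v, hsub hv⟩ ≠
        (G.induce R).connectedComponentMk ⟨w, hsub hw⟩) ∧
    (∀ c : (G.induce R).ConnectedComponent, ∃ (v : V) (hv : v ∈ D),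
      (G.induce R).connectedComponentMk ⟨v, hsub hv⟩ = c)

/-- `(D 0, D 1, ..., D (r-1))` is a disintegration of `G`: the steps partition the
vertex set and each step removes exactly one vertex per connected component of what remains. -/
def IsDisintegration {V : Type*} (G : SimpleGraph V) (D : ℕ → Set V) (r : ℕ) : Prop :=
  (∀ i, r ≤ i → D i = ∅) ∧ (⋃ i, D i) = Set.univ ∧
    ∀ i, DisStep G (Set.univ \ ⋃ j < i, D j) (D i)

/-- The graph resilience: minimal length of a disintegration. -/
noncomputable def resilience {V : Type*} (G : SimpleGraph V) : ℕ :=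
  sInf {r | ∃ D, IsDisintegration G D r}

namespace TreeRes

variable {V : Type*} (G : SimpleGraph V)

/-- Reachability within a vertex subset `S`, via walks whose support lies in `S`. -/
def Rch (S : Set V) (v w : V) : Prop :=
  ∃ p : G.Walk v w, ∀ x ∈ p.support, x ∈ S

/-- The connected component of `v` within `S`. -/
def comp (S : Set V) (v : V) : Set V := {w | Rch G S v w}

variable {G}

lemma Rch.mem_left {S : Set V} {v w : V} (h : Rch G S v w) : v ∈ S :=
  h.choose_spec _ (h.choose.start_mem_support)

lemma Rch.mem_right {S : Set V} {v w : V} (h : Rch G S v w) : w ∈ S :=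
  h.choose_spec _ (h.choose.end_mem_support)

lemma Rch.refl {S : Set V} {v : V} (hv : v ∈ S) : Rch G S v v :=
  ⟨SimpleGraph.Walk.nil, by simp [hv]⟩

lemma Rch.symm {S : Set V} {v w : V} (h : Rch G S v w) : Rch G S w v := by
  obtain ⟨p, hp⟩ := h
  exact ⟨p.reverse, by simpa using hp⟩

lemma Rch.trans {S : Set V} {u v w : V} (h : Rch G S u v) (h' : Rch G S v w) :
    Rch G S u w := by
  obtain ⟨p, hp⟩ := h; obtain ⟨q, hq⟩ := h'
  refine ⟨p.append q, fun x hx => ?_⟩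
  rcases (SimpleGraph.Walk.mem_support_append_iff _ _).1 hx with h | h
  · exact hp _ h
  · exact hq _ h

lemma Rch.single {S : Set V} {v w : V} (h : G.Adj v w) (hv : v ∈ S) (hw : w ∈ S) :
    Rch G S v w :=
  ⟨SimpleGraph.Walk.cons h SimpleGraph.Walk.nil, by
    intro x hx; simp only [SimpleGraph.Walk.support_cons, SimpleGraph.Walk.support_nil,
      List.mem_cons, List.mem_singleton] at hx
    rcases hx with rfl | hx | h; · exact hv
    · exact hx ▸ hw
    · exact absurd h (by simp)⟩

lemma Rch.mono {S T : Set V} (hST : S ⊆ T) {v w : V} (h : Rch G S v w) : Rch G T v w := by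
  obtain ⟨p, hp⟩ := h; exact ⟨p, fun x hx => hST (hp x hx)⟩

lemma mem_comp_self {S : Set V} {v : V} (hv : v ∈ S) : v ∈ comp G S v := Rch.refl hv

lemma comp_subset {S : Set V} (v : V) : comp G S v ⊆ S := fun _ h => Rch.mem_right h

lemma comp_mono {S T : Set V} (hST : S ⊆ T) (v : V) : comp G S v ⊆ comp G T v :=
  fun _ h => h.mono hST

lemma comp_eq_of_mem {S : Set V} {v w : V} (h : w ∈ comp G S v) :
    comp G S w = comp G S v := by
  ext x
  exact ⟨fun hx => Rch.trans h hx, fun hx => Rch.trans (Rch.symm h) hx⟩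

lemma Rch.closed {S A : Set V} {a b : V} (h : Rch G S a b) (ha : a ∈ A)
    (hcl : ∀ x y, x ∈ A → y ∈ S → G.Adj x y → y ∈ A) : b ∈ A := by
  obtain ⟨p, hp⟩ := h
  induction p with
  | nil => exact ha
  | @cons u c w hadj q ih =>
    refine ih ?_ (fun x hx => hp x (by simp [SimpleGraph.Walk.support_cons, hx]))
    exact hcl u c ha (hp c (by simp [SimpleGraph.Walk.support_cons])) hadj

lemma induce_walk_rch {S : Set V} {a b : ↥S} (p : (G.induce S).Walk a b) :
    Rch G S ↑a ↑b := by
  induction p with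
  | nil => exact Rch.refl (Subtype.mem _)
  | @cons a c b hadj q ih =>
    exact Rch.trans (Rch.single hadj (Subtype.mem a) (Subtype.mem c)) ih

lemma rch_walk_reachable {S : Set V} : ∀ {v w : V} (p : G.Walk v w)
    (h : ∀ x ∈ p.support, x ∈ S),
    (G.induce S).Reachable ⟨v, h v p.start_mem_support⟩ ⟨w, h w p.end_mem_support⟩ := by
  intro v w p
  induction p with
  | nil => intro h; rfl
  | @cons a c b hadj q ih =>
    intro h
    have hc : c ∈ S := h c (by simp [SimpleGraph.Walk.support_cons])
    have ha : a ∈ S := h a (by simp [SimpleGraph.Walk.support_cons])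
    have h1 : (G.induce S).Adj ⟨a, ha⟩ ⟨c, hc⟩ := hadj
    exact (h1.reachable).trans (ih (fun x hx => h x (by simp [SimpleGraph.Walk.support_cons, hx])))

/-- Bridge: reachability in the induced graph equals `Rch`. -/
lemma reachable_induce_iff {S : Set V} {v w : V} (hv : v ∈ S) (hw : w ∈ S) :
    (G.induce S).Reachable ⟨v, hv⟩ ⟨w, hw⟩ ↔ Rch G S v w := by
  constructor
  · rintro ⟨p⟩
    exact induce_walk_rch p
  · rintro ⟨p, hp⟩
    exact rch_walk_reachable p hp

end TreeRes

namespace TreeRes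
variable {V : Type*} {G : SimpleGraph V}

lemma exists_nbr {S : Set V} {w c : V} (h : Rch G S w c) (hne : w ≠ c) :
    ∃ u, G.Adj u c ∧ Rch G (S \ {c}) w u := by
  classical
  obtain ⟨p, hp⟩ := h
  have hq : ∀ x ∈ p.toPath.1.support, x ∈ S := fun x hx =>
    hp x (SimpleGraph.Walk.support_toPath_subset p hx)
  have hpath : (p.toPath.1.reverse).IsPath := p.toPath.2.reverse
  have hqs : ∀ x ∈ p.toPath.1.reverse.support, x ∈ S := by
    intro x hx; rw [SimpleGraph.Walk.support_reverse] at hx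
    exact hq x (List.mem_reverse.1 hx)
  -- reverse path from c to w
  cases hrev : p.toPath.1.reverse with
  | nil => exact absurd rfl hne.symm
  | @cons _ u _ hadj q =>
    rw [hrev] at hpath hqs
    have hnodup := hpath.support_nodup
    rw [SimpleGraph.Walk.support_cons, List.nodup_cons] at hnodup
    have hcq : c ∉ q.support := hnodup.1
    refine ⟨u, hadj.symm, Rch.symm ⟨q, fun x hx => ⟨?_, ?_⟩⟩⟩
    · exact hqs x (by simp [SimpleGraph.Walk.support_cons, hx])
    · simp only [Set.mem_singleton_iff]
      rintro rfl; exact hcq hx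

lemma nbr_unique (hA : G.IsAcyclic) {S : Set V} {u₁ u₂ c : V}
    (h₁ : G.Adj u₁ c) (h₂ : G.Adj u₂ c) (h : Rch G (S \ {c}) u₁ u₂) : u₁ = u₂ := by
  classical
  obtain ⟨p, hp⟩ := h
  have hcsup : c ∉ p.toPath.1.support := by
    intro hc
    exact (hp c (SimpleGraph.Walk.support_toPath_subset p hc)).2 rfl
  -- two paths from c to u₂
  let P1 : G.Walk c u₂ := SimpleGraph.Walk.cons h₂.symm SimpleGraph.Walk.nil
  let P2 : G.Walk c u₂ := SimpleGraph.Walk.cons h₁.symm p.toPath.1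
  have hP1 : P1.IsPath := by
    rw [SimpleGraph.Walk.cons_isPath_iff]
    exact ⟨SimpleGraph.Walk.IsPath.nil, by simp [h₂.ne']⟩
  have hP2 : P2.IsPath := by
    rw [SimpleGraph.Walk.cons_isPath_iff]
    exact ⟨p.toPath.2, hcsup⟩
  have := hA.path_unique ⟨P1, hP1⟩ ⟨P2, hP2⟩
  have hlen : P1.length = P2.length := congrArg (fun q : G.Path c u₂ => q.1.length) this
  simp only [P1, P2, SimpleGraph.Walk.length_cons, SimpleGraph.Walk.length_nil] at hlen
  have h0 : (p.toPath.1).length = 0 := by omega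
  exact SimpleGraph.Walk.eq_of_length_eq_zero h0

end TreeRes

namespace TreeRes
variable {V : Type*} [Fintype V] {G : SimpleGraph V}

/-- Centroid property. -/
def IsCent (G : SimpleGraph V) (S C : Set V) (c : V) : Prop :=
  c ∈ C ∧ ∀ w ∈ C, w ≠ c → 2 * (comp G (S \ {c}) w).ncard ≤ C.ncard

lemma centroid (hA : G.IsAcyclic) {S : Set V} {v0 : V} (hv0 : v0 ∈ S) :
    ∃ c, IsCent G S (comp G S v0) c := by
  classical
  set C := comp G S v0 with hC
  -- f x = max size of a component of S \ {x} met by C \ {x}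
  set f : V → ℕ := fun x => sSup {m | ∃ w ∈ C, w ≠ x ∧ m = (comp G (S \ {x}) w).ncard} with hf
  have hCS : C ⊆ S := comp_subset v0
  have hbdd : ∀ x, BddAbove {m | ∃ w ∈ C, w ≠ x ∧ m = (comp G (S \ {x}) w).ncard} := by
    intro x
    refine ⟨C.ncard, ?_⟩
    rintro m ⟨w, hw, -, rfl⟩
    have h1 : comp G (S \ {x}) w ⊆ C := by
      refine fun z hz => ?_
      have : z ∈ comp G S w := (comp_mono Set.diff_subset w) hz
      rwa [comp_eq_of_mem hw] at this
    exact Set.ncard_le_ncard h1 (Set.toFinite _)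
  obtain ⟨c, hcC, hmin⟩ := Finset.exists_min_image C.toFinset f (by
    exact Set.toFinset_nonempty.2 ⟨v0, mem_comp_self hv0⟩)
  rw [Set.mem_toFinset] at hcC
  refine ⟨c, hcC, ?_⟩
  by_contra hbad
  push_neg at hbad
  obtain ⟨w, hwC, hwc, hbig⟩ := hbad
  set C' := comp G (S \ {c}) w with hC'
  have hwS : w ∈ S := hCS hwC
  have hwC' : w ∈ C' := mem_comp_self ⟨hwS, by simpa using hwc⟩
  have hC'C : C' ⊆ C := by
    refine fun z hz => ?_
    have : z ∈ comp G S w := (comp_mono Set.diff_subset w) hz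
    rwa [comp_eq_of_mem hwC] at this
  -- the unique neighbor u of c inside C'
  obtain ⟨u, huc, hwu⟩ := exists_nbr (Rch.trans (Rch.symm hwC) hcC) hwc
  have huC' : u ∈ C' := hwu
  have huC : u ∈ C := hC'C huC'
  have hfc_ge : C'.ncard ≤ f c := le_csSup (hbdd c) ⟨w, hwC, hwc, rfl⟩
  have hC'pos : 1 ≤ C'.ncard := (Set.ncard_pos (Set.toFinite _)).2 ⟨w, hwC'⟩
  -- components of S \ {u} within C stay inside A = C' \ {u} or B = C \ C'
  have hclA : ∀ x y, x ∈ C' \ {u} → y ∈ S \ {u} → G.Adj x y → y ∈ C' \ {u} := by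
    rintro x y ⟨hxC', hxu⟩ ⟨hyS, hyu⟩ hadj
    refine ⟨?_, hyu⟩
    by_cases hyc : y = c
    · subst hyc
      exact absurd (nbr_unique hA hadj huc (Rch.trans (Rch.symm hxC') hwu)) hxu
    · exact Rch.trans hxC' (Rch.single hadj (Rch.mem_right hxC') ⟨hyS, by simpa using hyc⟩)
  have hclB : ∀ x y, x ∈ C \ C' → y ∈ S \ {u} → G.Adj x y → y ∈ C \ C' := by
    rintro x y ⟨hxC, hxC'⟩ ⟨hyS, hyu⟩ hadj
    have hyC : y ∈ C := by
      have : y ∈ comp G S x := Rch.single hadj (hCS hxC) hyS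
      rwa [comp_eq_of_mem hxC] at this
    refine ⟨hyC, fun hyC' => ?_⟩
    by_cases hxc : x = c
    · subst hxc
      have he : y = u := nbr_unique hA hadj.symm huc (Rch.trans (Rch.symm hyC') hwu)
      exact (by simpa using hyu : y ≠ u) he
    · exact hxC' (Rch.trans hyC' (Rch.single hadj.symm (Rch.mem_right hyC') ⟨hCS hxC, by simpa using hxc⟩))
  -- every component of S \ {u} has size ≤ C'.ncard - 1
  have hfu_le : f u ≤ C'.ncard - 1 := by
    refine csSup_le ⟨(comp G (S \ {u}) c).ncard, c, hcC, huc.ne', rfl⟩ ?_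
    rintro m ⟨w', hw'C, hw'u, rfl⟩
    by_cases hw'C' : w' ∈ C'
    · have hsub : comp G (S \ {u}) w' ⊆ C' \ {u} := by
        intro z hz
        exact Rch.closed hz ⟨hw'C', by simpa using hw'u⟩ hclA
      calc (comp G (S \ {u}) w').ncard ≤ (C' \ {u}).ncard :=
              Set.ncard_le_ncard hsub (Set.toFinite _)
        _ = C'.ncard - 1 := Set.ncard_diff_singleton_of_mem huC'
    · have hsub : comp G (S \ {u}) w' ⊆ C \ C' := by
        intro z hz
        exact Rch.closed hz ⟨hw'C, hw'C'⟩ hclB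
      have h2 : (C \ C').ncard = C.ncard - C'.ncard := Set.ncard_diff hC'C (Set.toFinite _)
      have h3 : (comp G (S \ {u}) w').ncard ≤ C.ncard - C'.ncard :=
        h2 ▸ Set.ncard_le_ncard hsub (Set.toFinite _)
      omega
  have : f c ≤ f u := hmin u (Set.mem_toFinset.2 huC)
  omega

end TreeRes

namespace TreeRes
variable {V : Type*} [Fintype V] {G : SimpleGraph V}

/-- The chosen centroid of a component. -/
noncomputable def centOf (G : SimpleGraph V) [Nonempty V] (S C : Set V) : V :=
  letI := Classical.dec (∃ c, IsCent G S C c)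
  if h : ∃ c, IsCent G S C c then h.choose else Classical.arbitrary V

variable [Nonempty V]

/-- The set of chosen centroids, one per component of `S`. -/
noncomputable def Dset (G : SimpleGraph V) [Nonempty V] (S : Set V) : Set V :=
  {x | x ∈ S ∧ x = centOf G S (comp G S x)}

lemma Dset_subset {S : Set V} : Dset G S ⊆ S := fun _ h => h.1

lemma Dset_isCent (hA : G.IsAcyclic) {S : Set V} {x : V} (hx : x ∈ Dset G S) :
    IsCent G S (comp G S x) x := by
  obtain ⟨hxS, he⟩ := hx
  have hex : ∃ c, IsCent G S (comp G S x) c := centroid hA hxS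
  unfold centOf at he
  rw [dif_pos hex] at he
  nth_rewrite 2 [he]
  exact hex.choose_spec

lemma cent_mem_Dset (hA : G.IsAcyclic) {S : Set V} {v : V} (hv : v ∈ S) :
    ∃ x ∈ Dset G S, x ∈ comp G S v := by
  have hex : ∃ c, IsCent G S (comp G S v) c := centroid hA hv
  set c := centOf G S (comp G S v) with hc
  have hcd : c = hex.choose := by rw [hc]; unfold centOf; rw [dif_pos hex]
  have hcmem : c ∈ comp G S v := hcd ▸ hex.choose_spec.1
  refine ⟨c, ⟨comp_subset _ hcmem, ?_⟩, hcmem⟩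
  rw [comp_eq_of_mem hcmem, ← hc]

lemma Dset_unique {S : Set V} {x y : V} (hx : x ∈ Dset G S) (hy : y ∈ Dset G S)
    (hr : Rch G S x y) : x = y := by
  have he : comp G S x = comp G S y := (comp_eq_of_mem (hr : y ∈ comp G S x)).symm
  rw [hx.2, hy.2, he]

lemma step_halves (hA : G.IsAcyclic) {S : Set V} {v : V} (hv : v ∈ S \ Dset G S) :
    2 * (comp G (S \ Dset G S) v).ncard ≤ (comp G S v).ncard := by
  obtain ⟨c, hcD, hcv⟩ := cent_mem_Dset hA hv.1
  have hvc : v ≠ c := fun h => hv.2 (h ▸ hcD)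
  have hcent := Dset_isCent hA hcD
  rw [comp_eq_of_mem hcv] at hcent
  have h1 := hcent.2 v (mem_comp_self hv.1) hvc
  have h2 : comp G (S \ Dset G S) v ⊆ comp G (S \ {c}) v :=
    comp_mono (Set.diff_subset_diff_right (by simpa using hcD)) v
  have h3 : (comp G (S \ Dset G S) v).ncard ≤ (comp G (S \ {c}) v).ncard :=
    Set.ncard_le_ncard h2 (Set.toFinite _)
  omega

lemma disStep (hA : G.IsAcyclic) (S : Set V) : DisStep G S (Dset G S) := by
  refine ⟨Dset_subset, ?_, ?_⟩
  · intro v w hv hw hne heq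
    rw [SimpleGraph.ConnectedComponent.eq, reachable_induce_iff] at heq
    exact hne (Dset_unique hv hw heq)
  · intro c
    obtain ⟨⟨v, hvS⟩, rfl⟩ := c.exists_rep
    obtain ⟨x, hxD, hxc⟩ := cent_mem_Dset hA hvS
    refine ⟨x, hxD, ?_⟩
    exact SimpleGraph.ConnectedComponent.sound ((reachable_induce_iff _ _).2 (Rch.symm hxc))

/-- The iterated removal sequence. -/
noncomputable def Rseq (G : SimpleGraph V) [Nonempty V] : ℕ → Set V
  | 0 => Set.univ
  | i + 1 => Rseq G i \ Dset G (Rseq G i)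

lemma Rseq_antitone {i j : ℕ} (h : i ≤ j) : Rseq G j ⊆ Rseq G i := by
  induction j with
  | zero => simp_all
  | succ n ih =>
    rcases Nat.lt_or_ge i (n+1) with hlt | hge
    · exact fun x hx => ih (by omega) (Set.diff_subset hx)
    · have : i = n + 1 := by omega
      subst this; exact fun x hx => hx

lemma Rseq_eq (G : SimpleGraph V) [Nonempty V] (i : ℕ) :
    Rseq G i = Set.univ \ ⋃ j < i, Dset G (Rseq G j) := by
  induction i with
  | zero => simp [Rseq]
  | succ n ih =>
    have hb : (⋃ j < n + 1, Dset G (Rseq G j)) =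
        (⋃ j < n, Dset G (Rseq G j)) ∪ Dset G (Rseq G n) := by
      ext x
      simp only [Set.mem_iUnion, Set.mem_union, Nat.lt_succ_iff_lt_or_eq]
      constructor
      · rintro ⟨j, hj | rfl, hx⟩
        · exact Or.inl ⟨j, hj, hx⟩
        · exact Or.inr hx
      · rintro (⟨j, hj, hx⟩ | hx)
        · exact ⟨j, Or.inl hj, hx⟩
        · exact ⟨n, Or.inr rfl, hx⟩
    rw [Rseq, hb, ← Set.diff_diff, ← ih]

lemma Rseq_bound (hA : G.IsAcyclic) (i : ℕ) {v : V} (hv : v ∈ Rseq G i) :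
    2 ^ i * (comp G (Rseq G i) v).ncard ≤ Fintype.card V := by
  induction i generalizing v with
  | zero =>
    simpa using le_trans (Set.ncard_le_ncard (Set.subset_univ _) (Set.toFinite _))
      (le_of_eq (by simp [Set.ncard_univ]))
  | succ n ih =>
    have hv' : v ∈ Rseq G n := Set.diff_subset hv
    have hs : 2 * (comp G (Rseq G (n+1)) v).ncard ≤ (comp G (Rseq G n) v).ncard :=
      step_halves hA hv
    have hb := ih hv'
    calc 2 ^ (n + 1) * (comp G (Rseq G (n+1)) v).ncard
        = 2 ^ n * (2 * (comp G (Rseq G (n+1)) v).ncard) := by ring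
      _ ≤ 2 ^ n * (comp G (Rseq G n) v).ncard := Nat.mul_le_mul_left _ hs
      _ ≤ Fintype.card V := hb

lemma Rseq_empty (hA : G.IsAcyclic) {i : ℕ} (h : Fintype.card V < 2 ^ i) :
    Rseq G i = ∅ := by
  by_contra hne
  obtain ⟨v, hv⟩ := Set.nonempty_iff_ne_empty.2 hne
  have h1 : 1 ≤ (comp G (Rseq G i) v).ncard :=
    (Set.ncard_pos (Set.toFinite _)).2 ⟨v, mem_comp_self hv⟩
  have h2 := Rseq_bound hA i hv
  nlinarith

lemma exists_disintegration (hA : G.IsAcyclic) {r : ℕ} (h : Fintype.card V < 2 ^ r) :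
    ∃ D, IsDisintegration G D r := by
  refine ⟨fun i => Dset G (Rseq G i), ?_, ?_, ?_⟩
  · intro i hi
    have h1 : Dset G (Rseq G i) ⊆ Rseq G r :=
      le_trans Dset_subset (Rseq_antitone hi)
    rw [Rseq_empty hA h] at h1
    exact Set.eq_empty_iff_forall_notMem.2 fun x hx => h1 hx
  · rw [Set.eq_univ_iff_forall]
    intro x
    have h1 := Rseq_eq G r
    rw [Rseq_empty hA h] at h1
    have h2 : x ∈ ⋃ j < r, Dset G (Rseq G j) := by
      by_contra hx
      exact (h1 ▸ (⟨trivial, hx⟩ : x ∈ Set.univ \ ⋃ j < r, Dset G (Rseq G j)) : x ∈ (∅ : Set V))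
    simp only [Set.mem_iUnion] at h2 ⊢
    obtain ⟨j, _, hj⟩ := h2
    exact ⟨j, hj⟩
  · intro i
    rw [← Rseq_eq]
    exact disStep hA (Rseq G i)

end TreeRes

theorem stmt9 {V : Type*} [Fintype V] (G : SimpleGraph V) (hT : G.IsTree)
    (d : ℕ) (hd : Fintype.card V = d) (h1 : 1 ≤ d) :
    (resilience G : ℝ) ≤ Real.logb 2 d + 1 := by
  haveI : Nonempty V := Fintype.card_pos_iff.1 (by omega)
  set r := Nat.log 2 d + 1 with hr
  have hlt : Fintype.card V < 2 ^ r := by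
    rw [hd, hr]
    exact Nat.lt_pow_succ_log_self (by norm_num) d
  have hres : resilience G ≤ r :=
    Nat.sInf_le (TreeRes.exists_disintegration hT.IsAcyclic hlt)
  have hlog : (Nat.log 2 d : ℝ) ≤ Real.logb 2 d := by
    rw [Real.le_logb_iff_rpow_le (by norm_num) (by exact_mod_cast Nat.lt_of_lt_of_le Nat.zero_lt_one h1)]
    rw [Real.rpow_natCast]
    exact_mod_cast Nat.pow_log_le_self 2 (by omega)
  calc (resilience G : ℝ) ≤ (r : ℝ) := by exact_mod_cast hres
    _ = (Nat.log 2 d : ℝ) + 1 := by rw [hr]; push_cast; ring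
    _ ≤ Real.logb 2 d + 1 := by linarith
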